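/- Let X be a time-homogeneous Markov chain on a finite state space S, let x, y ∈ S and let T be a positive integer. Then for any coupling ((X_t, Y_t))_{t=0}^T with (X_0, Y_0) = (x, y) and any separating sequence A = (A_t)_{t=0}^T, P(X_t = Y_t for some 0 ≤ t ≤ T) ≤ 2 − S^A_T(x,y). Consequently, the optimal meeting probability satisfies C_T(x,y) ≤ 2 − S_T(x,y). -/

import Mathlib

open MeasureTheory Filter Topology
open scoped ENNReal

/-- The distribution at time `n` of the time-homogeneous Markov chain with transition
kernel `K` started at `x`, i.e. `P^n(x, ·)`. -/
noncomputable def stepDist {S : Type*} (K : S → PMF S) (x : S) : ℕ → PMF S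
  | 0 => PMF.pure x
  | n + 1 => (stepDist K x n).bind K

/-- Total variation distance between two probability distributions on a countable space:
`sup_{A ⊆ S} |μ(A) − ν(A)|`. -/
noncomputable def tvDist {S : Type*} (μ ν : PMF S) : ℝ :=
  ⨆ A : Set S, |(∑' a : A, μ ↑a).toReal - (∑' a : A, ν ↑a).toReal|

open Classical in
/-- `X` is a copy, on the probability space `(Ω, Pr)`, of the time-homogeneous Markov chain
with transition kernel `K` started at `x`: all finite-dimensional distributions are the
ones prescribed by `x` and `K`. -/
def IsCopy {S Ω : Type*} [MeasurableSpace Ω] (Pr : Measure Ω)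
    (K : S → PMF S) (x : S) (X : ℕ → Ω → S) : Prop :=
  ∀ n : ℕ, ∀ path : ℕ → S,
    Pr {ω | ∀ i ≤ n, X i ω = path i}
      = (if path 0 = x then (1 : ℝ≥0∞) else 0) *
        ∏ i ∈ Finset.range n, K (path i) (path (i + 1))

open Classical in
/-- `X` is, on the probability space `(Ω, Pr)`, a copy over the finite time horizon `T` of the
Markov chain with transition kernel `K` started at `x`. -/
def IsCopyUpTo {S Ω : Type*} [MeasurableSpace Ω] (Pr : Measure Ω)
    (K : S → PMF S) (x : S) (T : ℕ) (X : ℕ → Ω → S) : Prop :=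
  ∀ n ≤ T, ∀ path : ℕ → S,
    Pr {ω | ∀ i ≤ n, X i ω = path i}
      = (if path 0 = x then (1 : ℝ≥0∞) else 0) *
        ∏ i ∈ Finset.range n, K (path i) (path (i + 1))

open Classical in
/-- `P(X_t ∈ A_t for all 0 ≤ t ≤ T | X_0 = x)` for the chain with kernel `K`. -/
noncomputable def stayProb {S : Type*} [Fintype S] (K : S → PMF S) (x : S) (T : ℕ)
    (A : ℕ → Set S) : ℝ≥0∞ :=
  ∑ p : Fin (T + 1) → S,
    if p 0 = x ∧ ∀ t : Fin (T + 1), p t ∈ A (t : ℕ) then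
      ∏ i : Fin T, K (p i.castSucc) (p i.succ) else 0

/-- The separation `S^A_T(x,y)` of a separating sequence `A = (A_t)_{t=0}^T`. -/
noncomputable def separation {S : Type*} [Fintype S] (K : S → PMF S) (x y : S) (T : ℕ)
    (A : ℕ → Set S) : ℝ :=
  (stayProb K x T A).toReal + (stayProb K y T (fun t => (A t)ᶜ)).toReal

/-- The optimal meeting probability `C_T(x,y)`: the maximal probability, over all couplings
over the horizon `T` of two copies of the chain started at `x` and `y`, that the copies meet by
time `T`. -/
noncomputable def optMeetProb {S : Type*} [Fintype S] (K : S → PMF S) (x y : S) (T : ℕ) : ℝ :=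
  sSup {r : ℝ | ∃ (Ω : Type) (_ : MeasurableSpace Ω) (Pr : Measure Ω),
    IsProbabilityMeasure Pr ∧ ∃ X Y : ℕ → Ω → S, IsCopyUpTo Pr K x T X ∧ IsCopyUpTo Pr K y T Y ∧
      r = (Pr {ω | ∃ t ≤ T, X t ω = Y t ω}).toReal}

/-- The optimal separation `S_T(x,y)`: the maximal separation over all separating sequences. -/
noncomputable def optSeparation {S : Type*} [Fintype S] (K : S → PMF S) (x y : S) (T : ℕ) : ℝ :=
  sSup {r : ℝ | ∃ A : ℕ → Set S, r = separation K x y T A}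


section Aux
variable {S : Type*} [Fintype S]

open Classical in
noncomputable def pathWeight (K : S → PMF S) (x : S) (T : ℕ) (p : Fin (T + 1) → S) : ℝ≥0∞ :=
  (if p 0 = x then (1 : ℝ≥0∞) else 0) * ∏ i : Fin T, K (p i.castSucc) (p i.succ)

lemma sum_pathsG (K : S → PMF S) :
    ∀ (n : ℕ) (g : S → ℝ≥0∞),
      ∑ p : Fin (n + 1) → S, g (p 0) * ∏ i : Fin n, K (p i.castSucc) (p i.succ) = ∑ s, g s := by
  intro n
  induction n with
  | zero =>
    intro g
    simp only [Finset.univ_unique, Fin.prod_univ_zero, mul_one]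
    exact Fintype.sum_equiv (Equiv.funUnique (Fin 1) S) _ _ (fun p => rfl)
  | succ n ih =>
    intro g
    have key := Fintype.sum_equiv (Fin.consEquiv (fun _ : Fin (n + 2) => S)).symm
      (fun p : Fin (n + 2) → S => g (p 0) * ∏ i : Fin (n + 1), (K (p i.castSucc)) (p i.succ))
      (fun sq : S × (Fin (n + 1) → S) =>
        (g sq.1 * (K sq.1) (sq.2 0)) * ∏ i : Fin n, (K (sq.2 i.castSucc)) (sq.2 i.succ))
      ?_
    · rw [key, Fintype.sum_prod_type]
      have inner : ∀ s : S,
          (∑ q : Fin (n + 1) → S,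
            (g s * (K s) (q 0)) * ∏ i : Fin n, (K (q i.castSucc)) (q i.succ)) = g s := by
        intro s
        rw [ih (fun u => g s * (K s) u), ← Finset.mul_sum]
        have : ∑ u, (K s) u = 1 := by rw [← tsum_fintype (L := SummationFilter.unconditional _)]; exact (K s).tsum_coe
        rw [this, mul_one]
      rw [Finset.sum_congr rfl (fun s _ => inner s)]
    · intro p
      show g (p 0) * ∏ i : Fin (n + 1), (K (p i.castSucc)) (p i.succ)
        = (g (p 0) * (K (p 0)) (p (0 : Fin (n + 1)).succ)) *
            ∏ i : Fin n, (K (p (i.castSucc).succ)) (p i.succ.succ)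
      rw [Fin.prod_univ_succ]
      have h0 : (0 : Fin (n + 1)).castSucc = 0 := Fin.castSucc_zero
      have h1 : ∀ i : Fin n, (K (p i.succ.castSucc)) (p i.succ.succ)
          = (K (p (i.castSucc).succ)) (p i.succ.succ) := by
        intro i; rw [Fin.succ_castSucc]
      rw [h0, Finset.prod_congr rfl (fun i _ => h1 i), mul_assoc]

open Classical in
lemma sum_pathWeight (K : S → PMF S) (x : S) (T : ℕ) :
    ∑ p : Fin (T + 1) → S, pathWeight K x T p = 1 := by
  unfold pathWeight
  rw [sum_pathsG K T (fun s => if s = x then 1 else 0)]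
  simp

def extPath {T : ℕ} (p : Fin (T + 1) → S) : ℕ → S :=
  fun i => p ⟨min i T, Nat.lt_succ_of_le (Nat.min_le_right i T)⟩

open Classical in
lemma measure_cover {Ω : Type*} [MeasurableSpace Ω] (Pr : Measure Ω)
    (K : S → PMF S) (x : S) (T : ℕ) (X : ℕ → Ω → S)
    (h : IsCopyUpTo Pr K x T X) (Q : (Fin (T + 1) → S) → Prop) :
    Pr {ω | Q (fun t => X t ω)} ≤
      ∑ p : Fin (T + 1) → S, if Q p then pathWeight K x T p else 0 := by
  classical
  set B : (Fin (T + 1) → S) → Set Ω :=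
    fun p => if Q p then {ω | ∀ i ≤ T, X i ω = extPath p i} else ∅ with hB
  have hsub : {ω | Q (fun t => X t ω)} ⊆ ⋃ p, B p := by
    intro ω hω
    refine Set.mem_iUnion.2 ⟨fun t => X t ω, ?_⟩
    have hq : Q (fun t => X (t : ℕ) ω) := hω
    simp only [hB, if_pos hq, Set.mem_setOf_eq]
    intro i hi
    simp only [extPath]
    congr 1
    exact (Nat.min_eq_left hi).symm
  have hBmeas : ∀ p, Pr (B p) = if Q p then pathWeight K x T p else 0 := by
    intro p
    rw [hB]
    by_cases hq : Q p
    · simp only [if_pos hq]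
      rw [h T le_rfl (extPath p)]
      have h0 : extPath p 0 = p 0 := by
        simp [extPath]
      rw [h0]
      have hprod : ∏ i ∈ Finset.range T, (K (extPath p i)) (extPath p (i+1))
          = ∏ i : Fin T, (K (p i.castSucc)) (p i.succ) := by
        rw [← Fin.prod_univ_eq_prod_range (fun i => (K (extPath p i)) (extPath p (i+1))) T]
        refine Finset.prod_congr rfl ?_
        intro i _
        congr 1
        · congr 1
          simp only [extPath]
          congr 1
          exact Fin.ext (by simp [Nat.min_eq_left (le_of_lt i.isLt)])
        · simp only [extPath]
          congr 1
          exact Fin.ext (by simp [Nat.min_eq_left (Nat.succ_le_of_lt i.isLt)])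
      rw [hprod]
      rfl
    · simp [hq]
  calc Pr {ω | Q (fun t => X t ω)} ≤ Pr (⋃ p, B p) := measure_mono hsub
    _ ≤ ∑' p, Pr (B p) := measure_iUnion_le B
    _ = ∑ p, Pr (B p) := tsum_fintype _
    _ = ∑ p, if Q p then pathWeight K x T p else 0 :=
        Finset.sum_congr rfl (fun p _ => hBmeas p)

open Classical in
lemma stayProb_eq (K : S → PMF S) (x : S) (T : ℕ) (A : ℕ → Set S) :
    stayProb K x T A
      = ∑ p : Fin (T + 1) → S,
          if (∀ t : Fin (T + 1), p t ∈ A (t : ℕ)) then pathWeight K x T p else 0 := by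
  unfold stayProb pathWeight
  refine Finset.sum_congr rfl ?_
  intro p _
  by_cases h1 : p 0 = x <;> by_cases h2 : ∀ t : Fin (T + 1), p t ∈ A (t : ℕ) <;>
    simp [h1, h2]

lemma stayProb_le_one (K : S → PMF S) (x : S) (T : ℕ) (A : ℕ → Set S) :
    stayProb K x T A ≤ 1 := by
  classical
  rw [stayProb_eq, ← sum_pathWeight K x T]
  refine Finset.sum_le_sum ?_
  intro p _
  split <;> simp

lemma bad_bound {Ω : Type*} [MeasurableSpace Ω] (Pr : Measure Ω)
    (K : S → PMF S) (x : S) (T : ℕ) (X : ℕ → Ω → S)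
    (h : IsCopyUpTo Pr K x T X) (A : ℕ → Set S) :
    Pr {ω | ¬ ∀ t ≤ T, X t ω ∈ A t} + stayProb K x T A ≤ 1 := by
  classical
  have hset : {ω | ¬ ∀ t ≤ T, X t ω ∈ A t}
      = {ω | ¬ ∀ t : Fin (T + 1), (fun t : Fin (T+1) => X (t : ℕ) ω) t ∈ A (t : ℕ)} := by
    ext ω
    simp only [Set.mem_setOf_eq]
    constructor
    · intro hc hall
      exact hc (fun t ht => hall ⟨t, Nat.lt_succ_of_le ht⟩)
    · intro hc hall
      exact hc (fun t => hall (t : ℕ) (Nat.le_of_lt_succ t.isLt))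
  have hcov := measure_cover Pr K x T X h
    (fun p => ¬ ∀ t : Fin (T + 1), p t ∈ A (t : ℕ))
  rw [hset]
  have h := add_le_add_left hcov (stayProb K x T A)
  refine le_trans h (le_of_eq ?_)
  rw [stayProb_eq, ← Finset.sum_add_distrib, ← sum_pathWeight K x T]
  refine Finset.sum_congr rfl ?_
  intro p _
  by_cases hq : ∀ t : Fin (T + 1), p t ∈ A (t : ℕ) <;> simp [hq]

lemma main_bound (K : S → PMF S) (x y : S) (T : ℕ) {Ω : Type*} [MeasurableSpace Ω]
    (Pr : Measure Ω) (hPr : IsProbabilityMeasure Pr) (X Y : ℕ → Ω → S)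
    (hX : IsCopyUpTo Pr K x T X) (hY : IsCopyUpTo Pr K y T Y) (A : ℕ → Set S) :
    (Pr {ω | ∃ t ≤ T, X t ω = Y t ω}).toReal ≤ 2 - separation K x y T A := by
  classical
  set sx := stayProb K x T A with hsx
  set sy := stayProb K y T (fun t => (A t)ᶜ) with hsy
  have h1 := bad_bound Pr K x T X hX A
  have h2 := bad_bound Pr K y T Y hY (fun t => (A t)ᶜ)
  have hMsub : {ω | ∃ t ≤ T, X t ω = Y t ω} ⊆
      {ω | ¬ ∀ t ≤ T, X t ω ∈ A t} ∪ {ω | ¬ ∀ t ≤ T, Y t ω ∈ (A t)ᶜ} := by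
    intro ω hω
    obtain ⟨t, ht, heq⟩ := hω
    by_contra hc
    simp only [Set.mem_union, Set.mem_setOf_eq, not_or, not_not] at hc
    exact (hc.2 t ht) (heq ▸ hc.1 t ht)
  have hM : Pr {ω | ∃ t ≤ T, X t ω = Y t ω}
      ≤ Pr {ω | ¬ ∀ t ≤ T, X t ω ∈ A t} + Pr {ω | ¬ ∀ t ≤ T, Y t ω ∈ (A t)ᶜ} :=
    le_trans (measure_mono hMsub) (measure_union_le _ _)
  have hsum : Pr {ω | ∃ t ≤ T, X t ω = Y t ω} + sx + sy ≤ 2 := by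
    calc Pr {ω | ∃ t ≤ T, X t ω = Y t ω} + sx + sy
        ≤ (Pr {ω | ¬ ∀ t ≤ T, X t ω ∈ A t}
            + Pr {ω | ¬ ∀ t ≤ T, Y t ω ∈ (A t)ᶜ}) + sx + sy :=
          add_le_add_left (add_le_add_left hM _) _
      _ = (Pr {ω | ¬ ∀ t ≤ T, X t ω ∈ A t} + sx)
            + (Pr {ω | ¬ ∀ t ≤ T, Y t ω ∈ (A t)ᶜ} + sy) := by ring
      _ ≤ 1 + 1 := add_le_add h1 h2
      _ = 2 := one_add_one_eq_two
  have hMfin : Pr {ω | ∃ t ≤ T, X t ω = Y t ω} ≠ ⊤ := measure_ne_top Pr _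
  have hsxfin : sx ≠ ⊤ := ne_top_of_le_ne_top (by norm_num) (stayProb_le_one K x T A)
  have hsyfin : sy ≠ ⊤ :=
    ne_top_of_le_ne_top (by norm_num) (stayProb_le_one K y T (fun t => (A t)ᶜ))
  have h3 := ENNReal.toReal_mono (by norm_num) hsum
  rw [ENNReal.toReal_add (ENNReal.add_ne_top.2 ⟨hMfin, hsxfin⟩) hsyfin,
      ENNReal.toReal_add hMfin hsxfin] at h3
  have h2r : ((2 : ℝ≥0∞)).toReal = 2 := by norm_num
  rw [h2r] at h3
  unfold separation
  rw [← hsx, ← hsy]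
  linarith

end Aux

/-- For any coupling over horizon `T` of copies started at `x` and `y` and any separating
sequence `A`, the meeting probability is at most `2 − S^A_T(x,y)`; consequently
`C_T(x,y) ≤ 2 − S_T(x,y)`. -/
theorem meetProb_le_two_sub_separation {S : Type*} [Fintype S] (K : S → PMF S) (x y : S)
    (T : ℕ) (hT : 0 < T) :
    (∀ (Ω : Type*) (_ : MeasurableSpace Ω) (Pr : Measure Ω), IsProbabilityMeasure Pr →
      ∀ X Y : ℕ → Ω → S, IsCopyUpTo Pr K x T X → IsCopyUpTo Pr K y T Y →
        ∀ A : ℕ → Set S,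
          (Pr {ω | ∃ t ≤ T, X t ω = Y t ω}).toReal ≤ 2 - separation K x y T A) ∧
    optMeetProb K x y T ≤ 2 - optSeparation K x y T := by
  classical
  refine ⟨fun Ω _ Pr hPr X Y hX hY A => main_bound K x y T Pr hPr X Y hX hY A, ?_⟩
  have hsep_le_two : ∀ r ∈ {r : ℝ | ∃ A : ℕ → Set S, r = separation K x y T A}, r ≤ 2 := by
    rintro r ⟨A, rfl⟩
    unfold separation
    have hx1 : (stayProb K x T A).toReal ≤ 1 :=
      ENNReal.toReal_le_of_le_ofReal (by norm_num) (by simpa using stayProb_le_one K x T A)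
    have hy1 : (stayProb K y T (fun t => (A t)ᶜ)).toReal ≤ 1 :=
      ENNReal.toReal_le_of_le_ofReal (by norm_num)
        (by simpa using stayProb_le_one K y T (fun t => (A t)ᶜ))
    linarith
  have hne : {r : ℝ | ∃ A : ℕ → Set S, r = separation K x y T A}.Nonempty :=
    ⟨separation K x y T (fun _ => ∅), fun _ => ∅, rfl⟩
  have hopt_le_two : optSeparation K x y T ≤ 2 := csSup_le hne hsep_le_two
  refine Real.sSup_le ?_ (by linarith)
  rintro r ⟨Ω, mΩ, Pr, hPr, X, Y, hX, hY, rfl⟩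
  have hsep : optSeparation K x y T ≤ 2 - (Pr {ω | ∃ t ≤ T, X t ω = Y t ω}).toReal := by
    refine csSup_le hne ?_
    rintro s ⟨A, rfl⟩
    have := main_bound K x y T Pr hPr X Y hX hY A
    linarith
  linarith
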